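/- Let ε ∈ (0, 1), let r : I → ℝ² (I an open interval) be a solution of the heliocentric equation of motion with r(t) ≠ 0 and r(t) ≠ r'(t) for all t ∈ I, and let R(t) = Rot(−t)·r(t) be its synodic coordinates. Then the Jacobi constant is conserved: the function t ↦ C(R(t), R'(t)), where R'(t) is the derivative of R at t, is constant on I. -/

import Mathlib

open Real

/-- The point of the Euclidean plane with coordinates `(x, y)`. -/
noncomputable def toE2 (x y : ℝ) : EuclideanSpace ℝ (Fin 2) :=
  (WithLp.equiv 2 (Fin 2 → ℝ)).symm ![x, y]

/-- Rotation of the Euclidean plane by the angle `α`. -/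
noncomputable def rot (α : ℝ) (v : EuclideanSpace ℝ (Fin 2)) : EuclideanSpace ℝ (Fin 2) :=
  toE2 (cos α * v 0 - sin α * v 1) (sin α * v 0 + cos α * v 1)

/-- The circular orbit of the planet: `r'(t) = (cos t, sin t)`. -/
noncomputable def rplanet (t : ℝ) : EuclideanSpace ℝ (Fin 2) := toE2 (cos t) (sin t)

/-- The Jacobi constant of the planar circular restricted three-body problem, in the
synodic reference frame centered on the Sun, with the planet of mass `ε` at `(1,0)`:
`C(P, V) = (P₁-ε)² + P₂² + ε(1-ε) + 2(ε/‖P-(1,0)‖ + (1-ε)/‖P‖) - ‖V‖²`. -/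
noncomputable def jacobiC (ε : ℝ) (P V : EuclideanSpace ℝ (Fin 2)) : ℝ :=
  (P 0 - ε) ^ 2 + (P 1) ^ 2 + ε * (1 - ε) +
    2 * (ε / ‖P - toE2 1 0‖ + (1 - ε) / ‖P‖) - ‖V‖ ^ 2

lemma toE2_apply0 (x y : ℝ) : toE2 x y 0 = x := rfl
lemma toE2_apply1 (x y : ℝ) : toE2 x y 1 = y := rfl

lemma rplanet_apply0 (t : ℝ) : rplanet t 0 = cos t := rfl
lemma rplanet_apply1 (t : ℝ) : rplanet t 1 = sin t := rfl

lemma norm_e2 (w : EuclideanSpace ℝ (Fin 2)) : ‖w‖ = Real.sqrt (w 0 ^ 2 + w 1 ^ 2) := by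
  rw [EuclideanSpace.norm_eq]
  simp [Fin.sum_univ_two, Real.norm_eq_abs, sq_abs]

lemma norm_toE2 (a b : ℝ) : ‖toE2 a b‖ = Real.sqrt (a ^ 2 + b ^ 2) := by
  rw [norm_e2, toE2_apply0, toE2_apply1]

lemma toE2_sub (a b c d : ℝ) : toE2 a b - toE2 c d = toE2 (a - c) (b - d) := by
  ext i; fin_cases i <;> rfl

lemma toE2_smul_add (a b : ℝ) : toE2 a b = a • toE2 1 0 + b • toE2 0 1 := by
  ext i
  rw [PiLp.add_apply, PiLp.smul_apply, PiLp.smul_apply, smul_eq_mul, smul_eq_mul]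
  fin_cases i
  · show a = a * 1 + b * 0; ring
  · show b = a * 0 + b * 1; ring

lemma hasDerivAt_toE2 {f g : ℝ → ℝ} {f' g' t : ℝ} (hf : HasDerivAt f f' t)
    (hg : HasDerivAt g g' t) :
    HasDerivAt (fun s => toE2 (f s) (g s)) (toE2 f' g') t := by
  have h := (hf.smul_const (toE2 1 0)).add (hg.smul_const (toE2 0 1))
  rw [toE2_smul_add f' g']
  exact h.congr_of_eventuallyEq (Filter.Eventually.of_forall fun s => toE2_smul_add _ _)

lemma sumsq_ne (w z : EuclideanSpace ℝ (Fin 2)) (h : w ≠ z) :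
    (w 0 - z 0) ^ 2 + (w 1 - z 1) ^ 2 ≠ 0 := by
  contrapose! h
  have h0 : w 0 = z 0 := by nlinarith [sq_nonneg (w 0 - z 0), sq_nonneg (w 1 - z 1)]
  have h1 : w 1 = z 1 := by nlinarith [sq_nonneg (w 0 - z 0), sq_nonneg (w 1 - z 1)]
  ext i; fin_cases i
  · exact h0
  · exact h1

lemma sumsq_pos (w z : EuclideanSpace ℝ (Fin 2)) (h : w ≠ z) :
    0 < (w 0 - z 0) ^ 2 + (w 1 - z 1) ^ 2 :=
  lt_of_le_of_ne (by positivity) (Ne.symm (sumsq_ne w z h))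

/-- The Jacobi constant along the solution, written explicitly in terms of the
heliocentric coordinates of the solution. -/
noncomputable def Gfun (ε : ℝ) (r v : ℝ → EuclideanSpace ℝ (Fin 2)) (s : ℝ) : ℝ :=
  -(2 * ε * (cos s * r s 0 + sin s * r s 1)) + ε
    + 2 * ε / Real.sqrt ((r s 0 - cos s) ^ 2 + (r s 1 - sin s) ^ 2)
    + 2 * (1 - ε) / Real.sqrt (r s 0 ^ 2 + r s 1 ^ 2)
    - v s 0 ^ 2 - v s 1 ^ 2 - 2 * (r s 1 * v s 0 - r s 0 * v s 1)

set_option maxHeartbeats 2000000 in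
/-- The explicit form of the Jacobi constant has derivative zero along the flow. -/
lemma hasDerivAt_G (ε : ℝ) (r v : ℝ → EuclideanSpace ℝ (Fin 2)) (t : ℝ)
    (hrd : HasDerivAt r (v t) t)
    (hvd : HasDerivAt v
      (-((1 - ε) / ‖r t‖ ^ 3) • r t - (ε / ‖r t - rplanet t‖ ^ 3) • (r t - rplanet t)
        - (ε / ‖rplanet t‖ ^ 3) • rplanet t) t)
    (h0 : r t ≠ 0) (hp : r t ≠ rplanet t) :
    HasDerivAt (Gfun ε r v) 0 t := by
  have hpx : HasDerivAt (fun s => r s 0) (v t 0) t :=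
    ((EuclideanSpace.proj (0 : Fin 2)).hasFDerivAt.comp_hasDerivAt t hrd :)
  have hpy : HasDerivAt (fun s => r s 1) (v t 1) t :=
    ((EuclideanSpace.proj (1 : Fin 2)).hasFDerivAt.comp_hasDerivAt t hrd :)
  have hρpos : (0:ℝ) < r t 0 ^ 2 + r t 1 ^ 2 := by
    have := sumsq_pos (r t) 0 h0
    simpa using this
  have hσpos : (0:ℝ) < (r t 0 - cos t) ^ 2 + (r t 1 - sin t) ^ 2 := by
    have := sumsq_pos (r t) (rplanet t) hp
    simpa [rplanet_apply0, rplanet_apply1] using this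
  have hρs : Real.sqrt (r t 0 ^ 2 + r t 1 ^ 2) ≠ 0 :=
    ne_of_gt (Real.sqrt_pos.mpr hρpos)
  have hσs : Real.sqrt ((r t 0 - cos t) ^ 2 + (r t 1 - sin t) ^ 2) ≠ 0 :=
    ne_of_gt (Real.sqrt_pos.mpr hσpos)
  have hnr : ‖r t‖ = Real.sqrt (r t 0 ^ 2 + r t 1 ^ 2) := norm_e2 _
  have hnp : ‖rplanet t‖ = 1 := by
    rw [norm_e2, rplanet_apply0, rplanet_apply1, Real.cos_sq_add_sin_sq, Real.sqrt_one]
  have hnσ : ‖r t - rplanet t‖ =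
      Real.sqrt ((r t 0 - cos t) ^ 2 + (r t 1 - sin t) ^ 2) := by
    rw [norm_e2, PiLp.sub_apply, PiLp.sub_apply, rplanet_apply0, rplanet_apply1]
  have hvx : HasDerivAt (fun s => v s 0)
      (-((1 - ε) / Real.sqrt (r t 0 ^ 2 + r t 1 ^ 2) ^ 3) * r t 0
        - ε / Real.sqrt ((r t 0 - cos t) ^ 2 + (r t 1 - sin t) ^ 2) ^ 3 * (r t 0 - cos t)
        - ε * cos t) t := by
    have h : HasDerivAt (fun s => v s 0)
        ((-((1 - ε) / ‖r t‖ ^ 3) • r t - (ε / ‖r t - rplanet t‖ ^ 3) • (r t - rplanet t)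
          - (ε / ‖rplanet t‖ ^ 3) • rplanet t) 0) t :=
      ((EuclideanSpace.proj (0 : Fin 2)).hasFDerivAt.comp_hasDerivAt t hvd :)
    simp only [PiLp.sub_apply, PiLp.smul_apply, smul_eq_mul, rplanet_apply0,
      hnr, hnp, hnσ, one_pow, div_one] at h
    exact h
  have hvy : HasDerivAt (fun s => v s 1)
      (-((1 - ε) / Real.sqrt (r t 0 ^ 2 + r t 1 ^ 2) ^ 3) * r t 1
        - ε / Real.sqrt ((r t 0 - cos t) ^ 2 + (r t 1 - sin t) ^ 2) ^ 3 * (r t 1 - sin t)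
        - ε * sin t) t := by
    have h : HasDerivAt (fun s => v s 1)
        ((-((1 - ε) / ‖r t‖ ^ 3) • r t - (ε / ‖r t - rplanet t‖ ^ 3) • (r t - rplanet t)
          - (ε / ‖rplanet t‖ ^ 3) • rplanet t) 1) t :=
      ((EuclideanSpace.proj (1 : Fin 2)).hasFDerivAt.comp_hasDerivAt t hvd :)
    simp only [PiLp.sub_apply, PiLp.smul_apply, smul_eq_mul, rplanet_apply1,
      hnr, hnp, hnσ, one_pow, div_one] at h
    exact h
  have hρd : HasDerivAt (fun s => Real.sqrt (r s 0 ^ 2 + r s 1 ^ 2))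
      ((((2:ℕ) * r t 0 ^ 1 * v t 0) + ((2:ℕ) * r t 1 ^ 1 * v t 1)) /
        (2 * Real.sqrt (r t 0 ^ 2 + r t 1 ^ 2))) t :=
    ((hpx.pow 2).add (hpy.pow 2)).sqrt (ne_of_gt hρpos)
  have hσd : HasDerivAt (fun s => Real.sqrt ((r s 0 - cos s) ^ 2 + (r s 1 - sin s) ^ 2))
      ((((2:ℕ) * (r t 0 - cos t) ^ 1 * (v t 0 - -sin t))
        + ((2:ℕ) * (r t 1 - sin t) ^ 1 * (v t 1 - cos t))) /
        (2 * Real.sqrt ((r t 0 - cos t) ^ 2 + (r t 1 - sin t) ^ 2))) t :=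
    (((hpx.sub (Real.hasDerivAt_cos t)).pow 2).add
      ((hpy.sub (Real.hasDerivAt_sin t)).pow 2)).sqrt (ne_of_gt hσpos)
  have H := ((((((((((Real.hasDerivAt_cos t).mul hpx).add
        ((Real.hasDerivAt_sin t).mul hpy)).const_mul (2*ε)).neg).add_const ε).add
        ((hasDerivAt_const t (2*ε)).div hσd hσs)).add
        ((hasDerivAt_const t (2*(1-ε))).div hρd hρs)).sub (hvx.pow 2)).sub (hvy.pow 2)).sub
        (((hpy.mul hvx).sub (hpx.mul hvy)).const_mul 2)
  convert H using 1
  · rfl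
  · rfl
  · rfl
  set x := r t 0; set y := r t 1; set u := v t 0; set w := v t 1
  set ρ := Real.sqrt (x ^ 2 + y ^ 2)
  set σ := Real.sqrt ((x - cos t) ^ 2 + (y - sin t) ^ 2)
  field_simp
  ring

/-- Along the solution, the Jacobi constant coincides with its explicit form `Gfun`. -/
lemma jacobiC_eq_G (ε : ℝ) (a b : ℝ)
    (r v : ℝ → EuclideanSpace ℝ (Fin 2))
    (hrv : ∀ t ∈ Set.Ioo a b, HasDerivAt r (v t) t)
    (R : ℝ → EuclideanSpace ℝ (Fin 2)) (hR : ∀ t, R t = rot (-t) (r t)) :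
    ∀ s ∈ Set.Ioo a b, jacobiC ε (R s) (deriv R s) = Gfun ε r v s := by
  intro s hs
  have hpx : HasDerivAt (fun τ => r τ 0) (v s 0) s :=
    ((EuclideanSpace.proj (0 : Fin 2)).hasFDerivAt.comp_hasDerivAt s (hrv s hs) :)
  have hpy : HasDerivAt (fun τ => r τ 1) (v s 1) s :=
    ((EuclideanSpace.proj (1 : Fin 2)).hasFDerivAt.comp_hasDerivAt s (hrv s hs) :)
  have hXd : HasDerivAt (fun τ => cos τ * r τ 0 + sin τ * r τ 1)
      (-sin s * r s 0 + cos s * v s 0 + (cos s * r s 1 + sin s * v s 1)) s :=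
    ((Real.hasDerivAt_cos s).mul hpx).add ((Real.hasDerivAt_sin s).mul hpy)
  have hYd : HasDerivAt (fun τ => -sin τ * r τ 0 + cos τ * r τ 1)
      (-cos s * r s 0 + -sin s * v s 0 + (-sin s * r s 1 + cos s * v s 1)) s :=
    (((Real.hasDerivAt_sin s).neg).mul hpx).add ((Real.hasDerivAt_cos s).mul hpy)
  have hRfun : R = fun τ => toE2 (cos τ * r τ 0 + sin τ * r τ 1)
      (-sin τ * r τ 0 + cos τ * r τ 1) := by
    funext τ
    rw [hR τ]
    simp only [rot, cos_neg, sin_neg]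
    congr 1 <;> ring
  have hRds : HasDerivAt R (toE2 (-sin s * r s 0 + cos s * v s 0 + (cos s * r s 1 + sin s * v s 1))
      (-cos s * r s 0 + -sin s * v s 0 + (-sin s * r s 1 + cos s * v s 1))) s := by
    rw [hRfun]; exact hasDerivAt_toE2 hXd hYd
  have hdR := hRds.deriv
  have hRs : R s = toE2 (cos s * r s 0 + sin s * r s 1) (-sin s * r s 0 + cos s * r s 1) :=
    congrFun hRfun s
  rw [jacobiC, hdR, hRs, toE2_sub, toE2_apply0, toE2_apply1, norm_toE2, norm_toE2, norm_toE2]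
  have e1 : (cos s * r s 0 + sin s * r s 1 - 1) ^ 2 + (-sin s * r s 0 + cos s * r s 1 - 0) ^ 2
      = (r s 0 - cos s) ^ 2 + (r s 1 - sin s) ^ 2 := by
    linear_combination (r s 0 ^ 2 + r s 1 ^ 2 - 1) * sin_sq_add_cos_sq s
  have e2 : (cos s * r s 0 + sin s * r s 1) ^ 2 + (-sin s * r s 0 + cos s * r s 1) ^ 2
      = r s 0 ^ 2 + r s 1 ^ 2 := by
    linear_combination (r s 0 ^ 2 + r s 1 ^ 2) * sin_sq_add_cos_sq s
  rw [e1, e2, Real.sq_sqrt (by positivity)]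
  simp only [Gfun]
  linear_combination (-(v s 0) ^ 2 - (v s 1) ^ 2 - 2 * r s 1 * v s 0 + 2 * r s 0 * v s 1)
    * sin_sq_add_cos_sq s

/-- Conservation of the Jacobi constant: along any collisionless solution `r` of the
heliocentric equation of motion of the planar circular restricted three-body problem on
an open interval, the Jacobi constant evaluated on the synodic position
`R(t) = Rot(-t)·r(t)` and the synodic velocity `R'(t)` is constant. -/
theorem jacobi_constant_conserved (ε : ℝ) (hε : ε ∈ Set.Ioo (0 : ℝ) 1) (a b : ℝ)
    (r v : ℝ → EuclideanSpace ℝ (Fin 2))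
    (hrv : ∀ t ∈ Set.Ioo a b, HasDerivAt r (v t) t)
    (hacc : ∀ t ∈ Set.Ioo a b, HasDerivAt v
      (-((1 - ε) / ‖r t‖ ^ 3) • r t - (ε / ‖r t - rplanet t‖ ^ 3) • (r t - rplanet t)
        - (ε / ‖rplanet t‖ ^ 3) • rplanet t) t)
    (hne0 : ∀ t ∈ Set.Ioo a b, r t ≠ 0)
    (hnep : ∀ t ∈ Set.Ioo a b, r t ≠ rplanet t)
    (R : ℝ → EuclideanSpace ℝ (Fin 2)) (hR : ∀ t, R t = rot (-t) (r t)) :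
    ∀ t₁ ∈ Set.Ioo a b, ∀ t₂ ∈ Set.Ioo a b,
      jacobiC ε (R t₁) (deriv R t₁) = jacobiC ε (R t₂) (deriv R t₂) := by
  have hFG := jacobiC_eq_G ε a b r v hrv R hR
  have key : ∀ t ∈ Set.Ioo a b,
      HasDerivAt (fun s => jacobiC ε (R s) (deriv R s)) 0 t := by
    intro t ht
    have hG := hasDerivAt_G ε r v t (hrv t ht) (hacc t ht) (hne0 t ht) (hnep t ht)
    exact hG.congr_of_eventuallyEq
      (Filter.eventuallyEq_of_mem (isOpen_Ioo.mem_nhds ht) (fun s hs => hFG s hs))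
  have main : ∀ s₁ ∈ Set.Ioo a b, ∀ s₂ ∈ Set.Ioo a b, s₁ ≤ s₂ →
      jacobiC ε (R s₂) (deriv R s₂) = jacobiC ε (R s₁) (deriv R s₁) := by
    intro s₁ h₁ s₂ h₂ h12
    have hsub : Set.Icc s₁ s₂ ⊆ Set.Ioo a b := Set.Icc_subset_Ioo h₁.1 h₂.2
    exact constant_of_has_deriv_right_zero
      (fun s hs => (key s (hsub hs)).continuousAt.continuousWithinAt)
      (fun s hs => (key s (hsub (Set.Ico_subset_Icc_self hs))).hasDerivWithinAt)
      s₂ (Set.right_mem_Icc.mpr h12)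
  intro t₁ ht₁ t₂ ht₂
  rcases le_total t₁ t₂ with h | h
  · exact (main t₁ ht₁ t₂ ht₂ h).symm
  · exact main t₂ ht₂ t₁ ht₁ h
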